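/- Let q be a positive integer and a, b integers, and set h(x) = x^4 + a x^3 + b x^2 + a q x + q^2. Then h is a q-Weil polynomial (all four complex roots have absolute value √q and come in conjugate pairs) if and only if |a| ≤ 4√q and −2q + 2√q·|a| ≤ b ≤ 2q + a^2/4. -/

import Mathlib

set_option maxHeartbeats 1000000

open Polynomial

/-- `h` is a `q`-Weil polynomial of degree `2*g`: its complex roots consist of
`g` conjugate pairs, each of complex absolute value `√q`. -/
def IsWeil (q g : ℕ) (h : Polynomial ℤ) : Prop :=
  ∃ w : Fin g → ℂ,
    (∀ i, ‖w i‖ = Real.sqrt q) ∧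
    h.map (Int.castRingHom ℂ) =
      ∏ i, ((Polynomial.X - Polynomial.C (w i)) *
            (Polynomial.X - Polynomial.C ((starRingEnd ℂ) (w i))))

lemma quadmul (u v k : ℂ) :
    (X^2 + C u * X + C k) * (X^2 + C v * X + C k) =
    X^4 + C (u+v) * X^3 + C (u*v + 2*k) * X^2 + C (k*(u+v)) * X + C (k^2) := by
  simp only [C_add, C_mul, map_ofNat, C_pow]
  ring

lemma conjpair (w : ℂ) :
    (X - C w) * (X - C ((starRingEnd ℂ) w)) =
    X^2 + C (-(w + (starRingEnd ℂ) w)) * X + C (w * (starRingEnd ℂ) w) := by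
  simp only [C_add, C_neg, C_mul]
  ring

lemma coeff_match (A B Cc D A' B' Cc' D' : ℂ)
    (h : X^4 + C A * X^3 + C B * X^2 + C Cc * X + C D =
         X^4 + C A' * X^3 + C B' * X^2 + C Cc' * X + C D') :
    A = A' ∧ B = B' ∧ Cc = Cc' ∧ D = D' := by
  refine ⟨?_, ?_, ?_, ?_⟩
  · have := congrArg (fun p => Polynomial.coeff p 3) h; simpa using this
  · have := congrArg (fun p => Polynomial.coeff p 2) h; simpa using this
  · have := congrArg (fun p => Polynomial.coeff p 1) h; simpa using this
  · have := congrArg (fun p => Polynomial.coeff p 0) h; simpa using this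

lemma hmap (q : ℕ) (a b : ℤ) :
    (X ^ 4 + C a * X ^ 3 + C b * X ^ 2 + C (a * q) * X + C ((q : ℤ) ^ 2)).map
        (Int.castRingHom ℂ) =
    X^4 + C (a:ℂ) * X^3 + C (b:ℂ) * X^2 + C ((a:ℂ)*(q:ℂ)) * X + C ((q:ℂ)^2) := by
  simp only [Polynomial.map_add, Polynomial.map_mul, Polynomial.map_pow, map_X, map_C,
    Int.coe_castRingHom]
  push_cast
  ring

/-- A root of `x^2 + c x + q` on the circle of radius `√q` (when `c^2 ≤ 4q`). -/
noncomputable def wroot (q : ℕ) (c : ℝ) : ℂ :=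
  ⟨-c / 2, Real.sqrt (q - c ^ 2 / 4)⟩

lemma wroot_abs (q : ℕ) (c : ℝ) (h : c ^ 2 ≤ 4 * q) :
    ‖wroot q c‖ = Real.sqrt q := by
  rw [Complex.norm_def]
  congr 1
  have h4 : (0:ℝ) ≤ (q : ℝ) - c ^ 2 / 4 := by linarith
  simp [Complex.normSq_apply, wroot]
  rw [Real.mul_self_sqrt h4]
  ring

lemma wroot_add_conj (q : ℕ) (c : ℝ) :
    -(wroot q c + (starRingEnd ℂ) (wroot q c)) = ((c : ℝ) : ℂ) := by
  rw [Complex.add_conj]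
  have : (wroot q c).re = -c / 2 := rfl
  rw [this]
  push_cast
  ring

lemma wroot_mul_conj (q : ℕ) (c : ℝ) (h : c ^ 2 ≤ 4 * q) :
    wroot q c * (starRingEnd ℂ) (wroot q c) = ((q : ℝ) : ℂ) := by
  rw [Complex.mul_conj]
  norm_cast
  have h4 : (0:ℝ) ≤ (q : ℝ) - c ^ 2 / 4 := by linarith
  simp [Complex.normSq_apply, wroot]
  rw [Real.mul_self_sqrt h4]
  ring

theorem stmt15 (q : ℕ) (hq : 0 < q) (a b : ℤ) :
    IsWeil q 2 (X ^ 4 + C a * X ^ 3 + C b * X ^ 2 + C (a * q) * X + C ((q : ℤ) ^ 2)) ↔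
      (|(a : ℝ)| ≤ 4 * Real.sqrt q ∧
        -2 * q + 2 * Real.sqrt q * |(a : ℝ)| ≤ (b : ℝ) ∧
        (b : ℝ) ≤ 2 * q + (a : ℝ) ^ 2 / 4) := by
  constructor
  · rintro ⟨w, habs, heq⟩
    set s := Real.sqrt q with hs
    have hs0 : 0 ≤ s := Real.sqrt_nonneg _
    have hs2 : s ^ 2 = q := Real.sq_sqrt (by positivity)
    set x : Fin 2 → ℝ := fun i => 2 * (w i).re with hx
    have hxle : ∀ i, |x i| ≤ 2 * s := by
      intro i
      have h1 : |(w i).re| ≤ ‖w i‖ := Complex.abs_re_le_norm _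
      rw [habs i] at h1
      rw [hx, abs_mul]
      simpa using by linarith [h1]
    have hsum : ∀ i, -(w i + (starRingEnd ℂ) (w i)) = ((-(x i) : ℝ) : ℂ) := by
      intro i
      rw [Complex.add_conj]
      push_cast [hx]
      ring
    have hmulc : ∀ i, w i * (starRingEnd ℂ) (w i) = ((q : ℝ) : ℂ) := by
      intro i
      rw [Complex.mul_conj]
      norm_cast
      rw [← Complex.sq_norm, habs i, hs2]
    rw [Fin.prod_univ_two, conjpair, conjpair, hsum 0, hsum 1, hmulc 0, hmulc 1,
      quadmul, hmap] at heq
    obtain ⟨h3, h2, _, _⟩ := coeff_match _ _ _ _ _ _ _ _ heq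
    have ha : (a : ℝ) = -(x 0) + -(x 1) := by exact_mod_cast h3
    have hb : (b : ℝ) = -(x 0) * -(x 1) + 2 * q := by exact_mod_cast h2
    obtain ⟨hx0l, hx0r⟩ := abs_le.mp (hxle 0)
    obtain ⟨hx1l, hx1r⟩ := abs_le.mp (hxle 1)
    have hm : (0:ℝ) ≤ (2*s - x 0) * (2*s - x 1) := by
      apply mul_nonneg <;> linarith
    have hp : (0:ℝ) ≤ (2*s + x 0) * (2*s + x 1) := by
      apply mul_nonneg <;> linarith
    refine ⟨?_, ?_, ?_⟩
    · rw [ha, abs_le]; constructor <;> linarith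
    · rcases abs_cases ((a:ℝ)) with ⟨he, _⟩ | ⟨he, _⟩ <;> rw [he, ha] at * <;>
        nlinarith [hm, hp, hs2, hb]
    · rw [ha, hb]; nlinarith [sq_nonneg (x 0 - x 1)]
  · rintro ⟨h1, h2, h3⟩
    set s := Real.sqrt q with hs
    have hs0 : 0 ≤ s := Real.sqrt_nonneg _
    have hs2 : s ^ 2 = q := Real.sq_sqrt (by positivity)
    have hD : (0:ℝ) ≤ (a:ℝ)^2 - 4*b + 8*q := by linarith
    set d := Real.sqrt ((a:ℝ)^2 - 4*b + 8*q) with hdd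
    have hd0 : 0 ≤ d := Real.sqrt_nonneg _
    have hd2 : d ^ 2 = (a:ℝ)^2 - 4*b + 8*q := Real.sq_sqrt hD
    set c₁ := ((a:ℝ) + d) / 2 with hc₁
    set c₂ := ((a:ℝ) - d) / 2 with hc₂
    have hsum : c₁ + c₂ = (a:ℝ) := by rw [hc₁, hc₂]; ring
    have hprod : c₁ * c₂ = (b:ℝ) - 2*q := by
      have e : c₁ * c₂ = ((a:ℝ)^2 - d^2) / 4 := by rw [hc₁, hc₂]; ring
      rw [e, hd2]; ring
    have h1' := abs_le.mp h1
    have hm : (0:ℝ) ≤ (2*s - c₁) * (2*s - c₂) := by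
      have e : (2*s - c₁) * (2*s - c₂) = 4*s^2 - 2*s*(c₁+c₂) + c₁*c₂ := by ring
      rw [e, hsum, hprod, hs2]
      nlinarith [mul_nonneg hs0 (sub_nonneg.2 (le_abs_self ((a:ℝ))))]
    have hp : (0:ℝ) ≤ (2*s + c₁) * (2*s + c₂) := by
      have e : (2*s + c₁) * (2*s + c₂) = 4*s^2 + 2*s*(c₁+c₂) + c₁*c₂ := by ring
      rw [e, hsum, hprod, hs2]
      nlinarith [mul_nonneg hs0 (sub_nonneg.2 (neg_abs_le ((a:ℝ))))]
    have hc21 : c₂ ≤ c₁ := by rw [hc₁, hc₂]; linarith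
    have hcall : c₁ + c₂ ≤ 4 * s := by rw [hsum]; exact h1'.2
    have hcall' : -(4*s) ≤ c₁ + c₂ := by rw [hsum]; linarith [h1'.1]
    have hc1u : c₁ ≤ 2 * s := by
      by_contra hc
      push_neg at hc
      have h' : (0:ℝ) ≤ (c₁ - 2*s) * (4*s - (c₁ + c₂)) :=
        mul_nonneg (by linarith) (by linarith)
      nlinarith [hm, h']
    have hc2l : -(2*s) ≤ c₂ := by
      by_contra hc
      push_neg at hc
      have h' : (0:ℝ) ≤ (-(2*s) - c₂) * ((c₁ + c₂) + 4*s) :=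
        mul_nonneg (by linarith) (by linarith)
      nlinarith [hp, h']
    have hc1l : -(2*s) ≤ c₁ := le_trans hc2l hc21
    have hc2u : c₂ ≤ 2 * s := le_trans hc21 hc1u
    have hsq1 : c₁ ^ 2 ≤ 4 * q := by
      have := sq_le_sq' hc1l hc1u
      calc c₁ ^ 2 ≤ (2*s)^2 := this
        _ = 4 * q := by rw [mul_pow, hs2]; norm_num
    have hsq2 : c₂ ^ 2 ≤ 4 * q := by
      have := sq_le_sq' hc2l hc2u
      calc c₂ ^ 2 ≤ (2*s)^2 := this
        _ = 4 * q := by rw [mul_pow, hs2]; norm_num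
    refine ⟨![wroot q c₁, wroot q c₂], ?_, ?_⟩
    · intro i
      fin_cases i
      · exact wroot_abs q c₁ hsq1
      · exact wroot_abs q c₂ hsq2
    · rw [Fin.prod_univ_two]
      simp only [Matrix.cons_val_zero, Matrix.cons_val_one, Matrix.head_cons]
      rw [conjpair, conjpair, wroot_add_conj, wroot_add_conj,
        wroot_mul_conj q c₁ hsq1, wroot_mul_conj q c₂ hsq2, quadmul, hmap]
      have e1 : ((c₁ : ℂ) + (c₂ : ℂ)) = (a : ℂ) := by
        rw [← Complex.ofReal_add, hsum]; push_cast; ring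
      have e2 : ((c₁ : ℂ) * (c₂ : ℂ) + 2 * ((q:ℝ):ℂ)) = (b : ℂ) := by
        rw [← Complex.ofReal_mul, hprod]; push_cast; ring
      rw [e1, e2]
      push_cast
      ring
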